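/- In the problem of maximizing Re(dᴴc) over c ∈ ℂ^M subject to ‖c‖² ≤ 1 and 2Re(c₀ᴴc) ≥ 2 − ζ (with ‖c₀‖ = 1, 0 ≤ ζ ≤ 2), if d = −ϱ c₀ for some ϱ > 0 and M ≥ 2, then c* = δc₀ + √(1 − δ²)·c₀⊥/‖c₀⊥‖ with δ = (2 − ζ)/2 and c₀⊥ any nonzero vector orthogonal to c₀ is an optimal solution, with optimal value −ϱδ. -/

import Mathlib

theorem stmt9 (M : ℕ) (hM : 2 ≤ M) (d c₀ cperp : EuclideanSpace ℂ (Fin M))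
    (hc₀ : ‖c₀‖ = 1) (ζ : ℝ) (hζ0 : 0 ≤ ζ) (hζ2 : ζ ≤ 2)
    (ϱ : ℝ) (hϱ : 0 < ϱ) (hd : d = -(ϱ • c₀))
    (hperp : cperp ≠ 0) (horth : (inner ℂ c₀ cperp : ℂ) = 0)
    (δ : ℝ) (hδ : δ = (2 - ζ) / 2)
    (cstar : EuclideanSpace ℂ (Fin M))
    (hcstar : cstar = δ • c₀ + (Real.sqrt (1 - δ ^ 2) / ‖cperp‖) • cperp) :
    (‖cstar‖ ^ 2 ≤ 1 ∧ 2 - ζ ≤ 2 * (inner ℂ c₀ cstar : ℂ).re) ∧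
    (inner ℂ d cstar : ℂ).re = -ϱ * δ ∧
    ∀ c : EuclideanSpace ℂ (Fin M), ‖c‖ ^ 2 ≤ 1 →
      2 - ζ ≤ 2 * (inner ℂ c₀ c : ℂ).re →
      (inner ℂ d c : ℂ).re ≤ -ϱ * δ := by
  have hδ0 : 0 ≤ δ := by rw [hδ]; linarith
  have hδ1 : δ ≤ 1 := by rw [hδ]; linarith
  have hδsq : 0 ≤ 1 - δ ^ 2 := by nlinarith
  have hnp : ‖cperp‖ ≠ 0 := norm_ne_zero_iff.mpr hperp
  set s : ℝ := Real.sqrt (1 - δ ^ 2) / ‖cperp‖ with hs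
  have hrsmul : ∀ (r : ℝ) (x : EuclideanSpace ℂ (Fin M)), r • x = (r : ℂ) • x := by
    intro r x; simp [Complex.coe_smul]
  have hinner : (inner ℂ c₀ cstar : ℂ) = (δ : ℂ) := by
    rw [hcstar, hrsmul δ, hrsmul s, inner_add_right, inner_smul_right, inner_smul_right,
      horth, inner_self_eq_norm_sq_to_K, hc₀]
    push_cast; ring
  have hnorm : ‖cstar‖ ^ 2 = 1 := by
    have horth2 : (inner ℂ ((δ:ℂ) • c₀) ((s:ℂ) • cperp) : ℂ) = 0 := by
      rw [inner_smul_left, inner_smul_right, horth]; ring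
    have hpy := norm_add_sq (𝕜 := ℂ) ((δ:ℂ) • c₀) ((s:ℂ) • cperp)
    rw [hcstar, hrsmul δ, hrsmul s, hpy, horth2]
    simp only [norm_smul, Complex.norm_real, map_zero, mul_zero, zero_mul]
    rw [hc₀]
    have : |s| * ‖cperp‖ = Real.sqrt (1 - δ ^ 2) := by
      rw [hs, abs_div, abs_of_nonneg (Real.sqrt_nonneg _), abs_of_nonneg (norm_nonneg _),
        div_mul_cancel₀ _ hnp]
    simp only [Complex.norm_real, Real.norm_eq_abs]
    rw [mul_pow, sq_abs, ← mul_pow, this, Real.sq_sqrt hδsq]; ring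
  refine ⟨⟨le_of_eq hnorm, ?_⟩, ?_, ?_⟩
  · rw [hinner]; simp [hδ]; linarith
  · rw [hd, hrsmul ϱ, inner_neg_left, inner_smul_left, hinner]
    simp
  · intro c hc1 hc2
    rw [hd, hrsmul ϱ, inner_neg_left, inner_smul_left]
    simp only [Complex.neg_re, Complex.mul_re, Complex.conj_re, Complex.ofReal_re,
      Complex.conj_im, Complex.ofReal_im, neg_zero, zero_mul, sub_zero]
    have : δ ≤ (inner ℂ c₀ c : ℂ).re := by rw [hδ]; linarith
    nlinarith
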